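/- For the sequential knapsack problem with n i.i.d. observations with distribution F and capacity x, the expected number of items packed by any online policy satisfies E[Ñ(n,x)] ≤ E[N(n,x)] ≤ n·F(t(n,x)), where t(n,x) solves n·∫_0^t y dF(y) = x. -/

import Mathlib

open MeasureTheory ProbabilityTheory Finset Set
open scoped Classical

lemma brs_key {n : ℕ} {x t : ℝ} (f : Fin n → ℝ) (A : Finset (Fin n))
    (hA : ∑ i ∈ A, f i ≤ x) :
    t * A.card + ∑ i ∈ Finset.univ.filter (fun i => f i ≤ t), f i ≤
      t * (Finset.univ.filter (fun i => f i ≤ t)).card + x := by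
  classical
  set T := Finset.univ.filter (fun i => f i ≤ t) with hT
  have h1 : ∀ i ∈ T \ A, f i ≤ t := fun i hi =>
    (Finset.mem_filter.mp (Finset.mem_sdiff.mp hi).1).2
  have h2 : ∀ i ∈ A \ T, t ≤ f i := by
    intro i hi
    have h := (Finset.mem_sdiff.mp hi).2
    simp only [hT, Finset.mem_filter, Finset.mem_univ, true_and, not_le] at h
    linarith
  have e1 : (#(T ∩ A) : ℝ) + #(A \ T) = #A := by
    rw [Finset.inter_comm]
    exact_mod_cast congrArg (Nat.cast (R := ℝ)) (Finset.card_inter_add_card_sdiff A T)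
  have e2 : ∑ i ∈ T ∩ A, f i + ∑ i ∈ T \ A, f i = ∑ i ∈ T, f i :=
    Finset.sum_inter_add_sum_sdiff T A f
  have e3 : (#(T ∩ A) : ℝ) + #(T \ A) = #T := by
    exact_mod_cast congrArg (Nat.cast (R := ℝ)) (Finset.card_inter_add_card_sdiff T A)
  have e4 : ∑ i ∈ T ∩ A, f i + ∑ i ∈ A \ T, f i = ∑ i ∈ A, f i := by
    rw [Finset.inter_comm]; exact Finset.sum_inter_add_sum_sdiff A T f
  have b1 : ∑ i ∈ T \ A, f i ≤ (#(T \ A) : ℝ) * t := by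
    have := Finset.sum_le_card_nsmul (T \ A) f t h1
    simpa [nsmul_eq_mul] using this
  have b2 : (#(A \ T) : ℝ) * t ≤ ∑ i ∈ A \ T, f i := by
    have := Finset.card_nsmul_le_sum (A \ T) f t h2
    simpa [nsmul_eq_mul] using this
  have m1 : t * (#A : ℝ) = t * #(T ∩ A) + t * #(A \ T) := by rw [← e1]; ring
  have m3 : t * (#T : ℝ) = t * #(T ∩ A) + t * #(T \ A) := by rw [← e3]; ring
  linarith

lemma meas_finset_sup {Ω ι : Type*} [MeasurableSpace Ω] (s : Finset ι)
    (g : ι → Ω → ℕ) (hg : ∀ i, Measurable (g i)) :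
    Measurable (fun ω => s.sup (fun i => g i ω)) := by
  classical
  induction s using Finset.induction_on with
  | empty => simpa using measurable_const
  | insert _ _ _ ih =>
    simp only [Finset.sup_insert]
    exact (hg _).sup ih

/-- Sequential knapsack: for `n` i.i.d. observations with distribution `F`
and capacity `x`, the number `Ñ(n,x)` of items packed by any online
(non-anticipating) policy satisfies
`E[Ñ(n,x)] ≤ E[N(n,x)] ≤ n·F(t(n,x))`, where `t(n,x)` solves
`n·∫_0^t y dF(y) = x`. -/
theorem brs_sequential_knapsack
    {Ω : Type*} [MeasureSpace Ω] [IsProbabilityMeasure (ℙ : Measure Ω)]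
    (n : ℕ) (x t : ℝ) (hx : 0 < x) (ht : 0 < t)
    (X : Fin n → Ω → ℝ) (hXmeas : ∀ k, Measurable (X k))
    (hXnonneg : ∀ k ω, 0 ≤ X k ω)
    (hiid : iIndepFun X ℙ)
    (μ : Measure ℝ) (hlaw : ∀ k, Measure.map (X k) ℙ = μ)
    (F : ℝ → ℝ) (hF : ∀ y, F y = (μ (Iic y)).toReal)
    (hBRS : (n : ℝ) * ∫ y in Ioc (0:ℝ) t, y ∂μ = x)
    -- the online policy: `D i ω` is the decision to accept item `i`,
    -- measurable with respect to the observations up to time `i`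
    (D : Fin n → Ω → Bool)
    (hadapt : ∀ i : Fin n, @Measurable Ω Bool
      (MeasurableSpace.comap (fun ω => fun j : Fin n =>
        if j ≤ i then X j ω else 0) inferInstance) _ (D i))
    (hfeas : ∀ ω, ∑ i ∈ Finset.univ.filter (fun i => D i ω = true), X i ω ≤ x)
    (Ntil : Ω → ℕ)
    (hNtil : ∀ ω, Ntil ω = (Finset.univ.filter (fun i => D i ω = true)).card)
    (N : Ω → ℕ)
    (hN : ∀ ω, N ω = ((Finset.univ.powerset.filter
      (fun A : Finset (Fin n) => ∑ i ∈ A, X i ω ≤ x)).sup Finset.card)) :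
    (∫ ω, (Ntil ω : ℝ)) ≤ (∫ ω, (N ω : ℝ)) ∧
    (∫ ω, (N ω : ℝ)) ≤ n * F t := by
  -- dispose of the degenerate case n = 0
  rcases Nat.eq_zero_or_pos n with hn0 | hn
  · exfalso; rw [hn0] at hBRS; simp at hBRS; linarith
  have k0 : Fin n := ⟨0, hn⟩
  -- μ is a probability measure
  have hμprob : IsProbabilityMeasure μ := by
    rw [← hlaw k0]; exact Measure.isProbabilityMeasure_map (hXmeas k0).aemeasurable
  -- basic measurability
  have hDmeas : ∀ i, Measurable (D i) := by
    intro i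
    have hφ : Measurable (fun ω => fun j : Fin n => if j ≤ i then X j ω else 0) := by
      apply measurable_pi_lambda
      intro j
      by_cases h : j ≤ i
      · simpa [h] using hXmeas j
      · simpa [h] using (measurable_const : Measurable fun _ : Ω => (0:ℝ))
    exact (hadapt i).mono hφ.comap_le le_rfl
  have hNtilrep : ∀ ω, (Ntil ω : ℝ) = ∑ i, if D i ω = true then (1:ℝ) else 0 := by
    intro ω; rw [hNtil, Finset.sum_boole]
  have hNtilmeas : Measurable (fun ω => (Ntil ω : ℝ)) := by
    rw [funext hNtilrep]
    apply Finset.measurable_sum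
    intro i _
    exact Measurable.ite (hDmeas i (measurableSet_singleton true)) measurable_const
      measurable_const
  have hNbound : ∀ ω, N ω ≤ n := by
    intro ω; rw [hN]
    apply Finset.sup_le
    intro A hA
    calc A.card ≤ (Finset.univ : Finset (Fin n)).card := Finset.card_le_card
          (Finset.mem_powerset.mp (Finset.mem_filter.mp hA).1)
      _ = n := by simp
  have hNrep : ∀ ω, N ω = Finset.univ.powerset.sup
      (fun A : Finset (Fin n) => if ∑ i ∈ A, X i ω ≤ x then A.card else 0) := by
    intro ω; rw [hN ω]
    apply le_antisymm
    · apply Finset.sup_le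
      intro A hA
      have hm := Finset.mem_filter.mp hA
      have h2 : A.card = if ∑ i ∈ A, X i ω ≤ x then A.card else 0 := by rw [if_pos hm.2]
      rw [h2]
      exact Finset.le_sup
        (f := fun A : Finset (Fin n) => if ∑ i ∈ A, X i ω ≤ x then A.card else 0) hm.1
    · apply Finset.sup_le
      intro A hA
      by_cases h : ∑ i ∈ A, X i ω ≤ x
      · rw [if_pos h]
        exact Finset.le_sup (f := Finset.card) (Finset.mem_filter.mpr ⟨hA, h⟩)
      · rw [if_neg h]; exact Nat.zero_le _
  have hNmeas : Measurable N := by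
    rw [funext hNrep]
    apply meas_finset_sup
    intro A
    exact Measurable.ite (measurableSet_le (Finset.measurable_sum _
      (fun i _ => hXmeas i)) measurable_const) measurable_const measurable_const
  -- integrability of Ntil and N
  have int_N : Integrable (fun ω => (N ω : ℝ)) := by
    have hm : Measurable (fun ω => (N ω : ℝ)) := measurable_from_nat.comp hNmeas
    apply Integrable.mono' (integrable_const (n : ℝ)) hm.aestronglyMeasurable
    apply ae_of_all
    intro ω
    rw [Real.norm_eq_abs, abs_of_nonneg (by positivity)]
    exact_mod_cast hNbound ω
  have int_Ntil : Integrable (fun ω => (Ntil ω : ℝ)) := by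
    apply Integrable.mono' (integrable_const (n : ℝ)) hNtilmeas.aestronglyMeasurable
    apply ae_of_all
    intro ω
    rw [Real.norm_eq_abs, abs_of_nonneg (by positivity)]
    have : Ntil ω ≤ n := by
      rw [hNtil]
      calc (Finset.univ.filter (fun i => D i ω = true)).card
          ≤ (Finset.univ : Finset (Fin n)).card :=
            Finset.card_le_card (Finset.filter_subset _ _)
        _ = n := by simp
    exact_mod_cast this
  -- Part 1: pointwise Ntil ≤ N
  have hpt1 : ∀ ω, (Ntil ω : ℝ) ≤ (N ω : ℝ) := by
    intro ω
    have h : Ntil ω ≤ N ω := by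
      rw [hNtil, hN]
      exact Finset.le_sup (f := Finset.card) (Finset.mem_filter.mpr
        ⟨Finset.mem_powerset.mpr (Finset.subset_univ _), hfeas ω⟩)
    exact_mod_cast h
  have part1 : (∫ ω, (Ntil ω : ℝ)) ≤ (∫ ω, (N ω : ℝ)) :=
    integral_mono int_Ntil int_N hpt1
  -- the auxiliary functions M and S
  set Mf : Ω → ℝ := fun ω => ∑ i, if X i ω ≤ t then (1:ℝ) else 0 with hMf
  set Sf : Ω → ℝ := fun ω => ∑ i, if X i ω ≤ t then X i ω else 0 with hSf
  have hMcard : ∀ ω, Mf ω = ((Finset.univ.filter (fun i => X i ω ≤ t)).card : ℝ) := by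
    intro ω; rw [hMf]; exact Finset.sum_boole _ _
  have hSsum : ∀ ω, Sf ω = ∑ i ∈ Finset.univ.filter (fun i => X i ω ≤ t), X i ω := by
    intro ω; rw [hSf]; exact (Finset.sum_filter _ _).symm
  -- integral computations via the law μ
  have hMint : ∀ i : Fin n, ∫ ω, (if X i ω ≤ t then (1:ℝ) else 0) = (μ (Iic t)).toReal := by
    intro i
    have hg : Measurable (fun y : ℝ => if y ≤ t then (1:ℝ) else 0) :=
      Measurable.ite measurableSet_Iic measurable_const measurable_const
    have h1 : ∫ y, (if y ≤ t then (1:ℝ) else 0) ∂μ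
        = ∫ ω, (if X i ω ≤ t then (1:ℝ) else 0) := by
      rw [← hlaw i]
      exact integral_map (hXmeas i).aemeasurable hg.aestronglyMeasurable
    rw [← h1]
    have h2 : (fun y : ℝ => if y ≤ t then (1:ℝ) else 0)
        = (Iic t).indicator (fun _ => (1:ℝ)) := by
      funext y; simp [Set.indicator_apply, Set.mem_Iic]
    rw [h2, integral_indicator measurableSet_Iic, setIntegral_const, smul_eq_mul, mul_one, measureReal_def]
  -- μ gives no mass to negatives
  have h0 : μ (Iio 0) = 0 := by
    rw [← hlaw k0, Measure.map_apply (hXmeas k0) measurableSet_Iio]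
    have : (X k0) ⁻¹' (Iio 0) = ∅ := by
      ext ω; simp only [Set.mem_preimage, Set.mem_Iio, Set.mem_empty_iff_false, iff_false,
        not_lt]
      exact hXnonneg k0 ω
    rw [this]; simp
  have haez : (fun y : ℝ => y) =ᵐ[μ.restrict (Iic 0)] 0 := by
    have h' : ∀ᵐ (y : ℝ) ∂μ.restrict (Iic 0), y = 0 := by
      rw [ae_restrict_iff' measurableSet_Iic]
      have hnn : ∀ᵐ (y : ℝ) ∂μ, y ∉ Set.Iio (0:ℝ) := by
        rw [ae_iff]; convert h0 using 2; ext y; simp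
      filter_upwards [hnn] with y hy hy0
      exact le_antisymm hy0 (not_lt.mp hy)
    filter_upwards [h'] with y hy
    simpa using hy
  have hInt0 : IntegrableOn (fun y : ℝ => y) (Iic 0) μ :=
    (integrable_zero _ _ _).congr haez.symm
  have hI0 : ∫ y in Iic 0, y ∂μ = 0 := integral_eq_zero_of_ae haez
  have hInt1 : IntegrableOn (fun y : ℝ => y) (Ioc 0 t) μ := by
    apply Integrable.mono' (integrable_const t) measurable_id'.aestronglyMeasurable
    rw [ae_restrict_iff' measurableSet_Ioc]
    apply ae_of_all
    intro y hy
    rw [Real.norm_eq_abs, abs_of_pos hy.1]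
    exact hy.2
  have hIic : ∫ y in Iic t, y ∂μ = ∫ y in Ioc 0 t, y ∂μ := by
    rw [← Set.Iic_union_Ioc_eq_Iic ht.le,
      setIntegral_union (Set.Iic_disjoint_Ioc le_rfl) measurableSet_Ioc hInt0 hInt1,
      hI0, zero_add]
  have hSint : ∀ i : Fin n, ∫ ω, (if X i ω ≤ t then X i ω else 0)
      = ∫ y in Ioc 0 t, y ∂μ := by
    intro i
    have hg : Measurable (fun y : ℝ => if y ≤ t then y else 0) :=
      Measurable.ite measurableSet_Iic measurable_id measurable_const
    have h1 : ∫ y, (if y ≤ t then y else 0) ∂μ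
        = ∫ ω, (if X i ω ≤ t then X i ω else 0) := by
      rw [← hlaw i]
      exact integral_map (hXmeas i).aemeasurable hg.aestronglyMeasurable
    rw [← h1]
    have h2 : (fun y : ℝ => if y ≤ t then y else 0) = (Iic t).indicator id := by
      funext y; simp [Set.indicator_apply, Set.mem_Iic]
    rw [h2, integral_indicator measurableSet_Iic]
    exact hIic
  -- integrability of summands
  have intM : ∀ i : Fin n, Integrable (fun ω => if X i ω ≤ t then (1:ℝ) else 0) := by
    intro i
    apply Integrable.mono' (integrable_const (1:ℝ))
      ((Measurable.ite (measurableSet_le (hXmeas i) measurable_const) measurable_const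
        measurable_const).aestronglyMeasurable)
    apply ae_of_all; intro ω; split_ifs <;> simp
  have intS : ∀ i : Fin n, Integrable (fun ω => if X i ω ≤ t then X i ω else 0) := by
    intro i
    apply Integrable.mono' (integrable_const t)
      ((Measurable.ite (measurableSet_le (hXmeas i) measurable_const) (hXmeas i)
        measurable_const).aestronglyMeasurable)
    apply ae_of_all; intro ω
    by_cases h : X i ω ≤ t
    · rw [if_pos h, Real.norm_eq_abs, abs_of_nonneg (hXnonneg i ω)]; exact h
    · rw [if_neg h]; simpa using ht.le
  have int_Mf : Integrable Mf := by
    rw [hMf]; exact integrable_finset_sum _ (fun i _ => intM i)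
  have int_Sf : Integrable Sf := by
    rw [hSf]; exact integrable_finset_sum _ (fun i _ => intS i)
  have hMfint : ∫ ω, Mf ω = n * (μ (Iic t)).toReal := by
    rw [hMf]
    rw [integral_finset_sum _ (fun i _ => intM i)]
    simp [hMint]
  have hSfint : ∫ ω, Sf ω = x := by
    rw [hSf, integral_finset_sum _ (fun i _ => intS i)]
    simp only [hSint]
    rw [Finset.sum_const, Finset.card_univ, Fintype.card_fin, nsmul_eq_mul]
    exact hBRS
  -- pointwise BRS bound
  have hpt2 : ∀ ω, t * (N ω : ℝ) + Sf ω ≤ t * Mf ω + x := by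
    intro ω
    have hne : (Finset.univ.powerset.filter
        (fun A : Finset (Fin n) => ∑ i ∈ A, X i ω ≤ x)).Nonempty :=
      ⟨∅, Finset.mem_filter.mpr ⟨Finset.mem_powerset.mpr (Finset.empty_subset _),
        by simp [hx.le]⟩⟩
    obtain ⟨A, hAmem, hAsup⟩ := Finset.exists_mem_eq_sup _ hne Finset.card
    have hAx : ∑ i ∈ A, X i ω ≤ x := (Finset.mem_filter.mp hAmem).2
    have hkey := brs_key (x := x) (t := t) (fun i => X i ω) A hAx
    rw [hN ω, hAsup, hMcard ω, hSsum ω]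
    exact hkey
  -- combine
  have hcomb : (∫ ω, (t * (N ω : ℝ) + Sf ω)) ≤ ∫ ω, (t * Mf ω + x) :=
    integral_mono ((int_N.const_mul t).add int_Sf)
      ((int_Mf.const_mul t).add (integrable_const x)) hpt2
  rw [integral_add (int_N.const_mul t) int_Sf,
    integral_add (int_Mf.const_mul t) (integrable_const x),
    integral_const_mul, integral_const_mul, integral_const, hSfint, hMfint] at hcomb
  simp only [probReal_univ, smul_eq_mul, one_mul] at hcomb
  have hFt : F t = (μ (Iic t)).toReal := hF t
  constructor
  · exact part1
  · rw [hFt]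
    have := le_of_add_le_add_right hcomb
    exact le_of_mul_le_mul_left (by linarith) ht
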